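/- arXiv:math/0205115 — 2 statements merged into one kernel-verified Lean document; each statement's English description precedes it below -/
import Mathlib

section
/- Any root λ of λ⁴ + (Γ²/20)λ² + (9/400)Γ⁴ = 0 with Γ ≠ 0 real satisfies |λ| = (|Γ|/2)·√(3/5); moreover λ has nonzero real part, so the system is linearly unstable. -/
open Complex

/-- Every root of λ⁴ + (Γ²/20)λ² + (9/400)Γ⁴ = 0 has modulus
    (|Γ|/2)√(3/5) and nonzero real part (linear instability). -/
theorem quartic_root_modulus_and_instability (Γ : ℝ) (hΓ : Γ ≠ 0) (lam : ℂ)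
    (hroot : lam ^ 4 + ((Γ : ℂ) ^ 2 / 20) * lam ^ 2
        + (9 / 400) * (Γ : ℂ) ^ 4 = 0) :
    ‖lam‖ = (|Γ| / 2) * Real.sqrt (3 / 5) ∧ lam.re ≠ 0 := by
  set s : ℝ := Real.sqrt 35 with hsdef
  have hs2 : s ^ 2 = 35 := Real.sq_sqrt (by norm_num)
  have hspos : 0 < s := Real.sqrt_pos.mpr (by norm_num)
  have hsC : (s : ℂ) ^ 2 = 35 := by exact_mod_cast congrArg (Complex.ofReal) hs2
  have hfac : (lam ^ 2 + (Γ : ℂ) ^ 2 / 40 + (s : ℂ) * (Γ : ℂ) ^ 2 / 40 * I) *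
      (lam ^ 2 + (Γ : ℂ) ^ 2 / 40 - (s : ℂ) * (Γ : ℂ) ^ 2 / 40 * I) = 0 := by
    have hI : (I : ℂ) ^ 2 = -1 := Complex.I_sq
    linear_combination hroot + ((Γ : ℂ) ^ 4 / 1600) * hsC -
      ((s : ℂ) ^ 2 * (Γ : ℂ) ^ 4 / 1600) * hI
  -- In either case, lam^2 = -(Γ^2/40) ∓ (s Γ^2/40) I
  have key : ∀ ε : ℝ, ε = 1 ∨ ε = -1 →
      lam ^ 2 = ((-(Γ^2/40) : ℝ) : ℂ) + ((ε * (s * Γ^2 / 40) : ℝ) : ℂ) * I →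
      ‖lam‖ = (|Γ| / 2) * Real.sqrt (3 / 5) ∧ lam.re ≠ 0 := by
    intro ε hε heq
    have hε2 : ε ^ 2 = 1 := by rcases hε with h | h <;> rw [h] <;> norm_num
    have hεne : ε ≠ 0 := by rcases hε with h | h <;> rw [h] <;> norm_num
    have hnsq : Complex.normSq (lam ^ 2) = (3 * Γ ^ 2 / 20) ^ 2 := by
      rw [heq, Complex.normSq_add_mul_I]
      linear_combination (s^2*Γ^4/1600)*hε2 + (Γ^4/1600)*hs2
    have hns : Complex.normSq lam = 3 * Γ ^ 2 / 20 := by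
      have h1 : Complex.normSq (lam ^ 2) = (Complex.normSq lam) ^ 2 := map_pow _ _ _
      have h2 := Complex.normSq_nonneg lam
      nlinarith [hnsq]
    constructor
    · have habs : ‖lam‖ ^ 2 = 3 * Γ ^ 2 / 20 := by
        rw [Complex.sq_norm]; exact hns
      have hR : ((|Γ| / 2) * Real.sqrt (3 / 5)) ^ 2 = 3 * Γ ^ 2 / 20 := by
        rw [mul_pow, div_pow, _root_.sq_abs, Real.sq_sqrt (by norm_num : (3:ℝ)/5 ≥ 0)]
        ring
      have h1 : 0 ≤ ‖lam‖ := norm_nonneg lam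
      have h2 : 0 ≤ (|Γ| / 2) * Real.sqrt (3 / 5) := by positivity
      nlinarith [habs, hR]
    · intro hre
      have him : (lam ^ 2).im = 0 := by
        rw [pow_two, Complex.mul_im, hre]; ring
      rw [heq] at him
      simp only [Complex.add_im, Complex.ofReal_im, Complex.mul_im, Complex.ofReal_re,
        Complex.I_im, Complex.I_re, mul_zero, mul_one, zero_add, add_zero, zero_mul] at him
      have hne : ε * (s * Γ ^ 2 / 40) ≠ 0 :=
        mul_ne_zero hεne (by positivity)
      exact hne him
  rcases mul_eq_zero.mp hfac with h | h
  · refine key (-1) (Or.inr rfl) ?_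
    push_cast
    linear_combination h
  · refine key 1 (Or.inl rfl) ?_
    push_cast
    linear_combination h
end

section
/- The quantity I = 2A_{1,2}(ω₁ω₃ + ω₂ω₄) + A₂ω_p² is conserved along solutions of the five-dimensional Galerkin truncation: ω̇₁ = −A₂ω_pω₂, ω̇₂ = A₁ω_pω₁ − A₂ω_pω₃, ω̇₃ = A₂ω_pω₂ − A₁ω_pω₄, ω̇₄ = A₂ω_pω₃, ω̇_p = A_{1,2}(ω₃ω₄ − ω₁ω₂), where A₁ = −3/10, A₂ = 1/2, A_{1,2} = −4/5. -/
/-- I = 2A₁₂(ω₁ω₃ + ω₂ω₄) + A₂ω_p² is conserved along the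
    five-dimensional Galerkin truncation of the 2D Euler equation. -/
theorem I_invariant
    (A₁ A₂ A₁₂ : ℝ) (hA₁ : A₁ = -3 / 10) (hA₂ : A₂ = 1 / 2) (hA₁₂ : A₁₂ = -4 / 5)
    (w₁ w₂ w₃ w₄ wp : ℝ → ℝ)
    (h1 : ∀ t, HasDerivAt w₁ (-A₂ * wp t * w₂ t) t)
    (h2 : ∀ t, HasDerivAt w₂ (A₁ * wp t * w₁ t - A₂ * wp t * w₃ t) t)
    (h3 : ∀ t, HasDerivAt w₃ (A₂ * wp t * w₂ t - A₁ * wp t * w₄ t) t)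
    (h4 : ∀ t, HasDerivAt w₄ (A₂ * wp t * w₃ t) t)
    (hp : ∀ t, HasDerivAt wp (A₁₂ * (w₃ t * w₄ t - w₁ t * w₂ t)) t) :
    ∀ t t' : ℝ,
      2 * A₁₂ * (w₁ t * w₃ t + w₂ t * w₄ t) + A₂ * wp t ^ 2
        = 2 * A₁₂ * (w₁ t' * w₃ t' + w₂ t' * w₄ t') + A₂ * wp t' ^ 2 := by
  have key : ∀ t : ℝ, HasDerivAt
      (fun t => 2 * A₁₂ * (w₁ t * w₃ t + w₂ t * w₄ t) + A₂ * wp t ^ 2) 0 t := by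
    intro t
    have h := ((((h1 t).mul (h3 t)).add ((h2 t).mul (h4 t))).const_mul (2 * A₁₂)).add
      (((hp t).pow 2).const_mul A₂)
    refine h.congr_deriv ?_
    subst hA₁ hA₂ hA₁₂
    norm_num
    ring
  intro t t'
  have : ∀ s : ℝ,
      (2 * A₁₂ * (w₁ s * w₃ s + w₂ s * w₄ s) + A₂ * wp s ^ 2) =
      (2 * A₁₂ * (w₁ t' * w₃ t' + w₂ t' * w₄ t') + A₂ * wp t' ^ 2) := by
    intro s
    exact is_const_of_deriv_eq_zero (fun x => (key x).differentiableAt)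
      (fun x => (key x).deriv) s t'
  exact this t
end
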